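/- Let ℓ ≥ 1, k ≥ 0, 1 ≤ p ≤ ℓ, and let μ = (c_1, ..., c_n) be integers with ℓ ≥ c_1 ≥ c_2 ≥ ... ≥ c_n ≥ 0 and Σ_{i=1}^n c_i = 2(kℓ + p). Set Λ = Σ_{i=2k+2}^n c_i (with Λ = 0 if 2k+2 > n). Then there exists a semistandard Young tableau of shape ϱ = (ℓ^{2k}, p, p) with content μ if and only if Λ ≥ p. -/

import Mathlib

/-- `IsSSYT R C r n c T` : the filling `T` (entry `T a b` in row `a`, column `b`,
both 1-indexed) is a semistandard Young tableau of the shape whose `a`-th row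
(for `1 ≤ a ≤ R`) consists of the boxes `(a, b)` with `1 ≤ b ≤ r a` (where
`r a ≤ C`), with entries in `{1, ..., n}`, rows weakly increasing, columns
strictly increasing, and using exactly `c i` entries equal to `i` for each
`1 ≤ i ≤ n`. -/
def IsSSYT (R C : ℕ) (r : ℕ → ℕ) (n : ℕ) (c : ℕ → ℕ) (T : ℕ → ℕ → ℕ) : Prop :=
  (∀ a ∈ Finset.Icc 1 R, ∀ b ∈ Finset.Icc 1 (r a), 1 ≤ T a b ∧ T a b ≤ n) ∧
  (∀ a ∈ Finset.Icc 1 R, ∀ b b' : ℕ, 1 ≤ b → b ≤ b' → b' ≤ r a → T a b ≤ T a b') ∧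
  (∀ a : ℕ, 1 ≤ a → a + 1 ≤ R → ∀ b : ℕ, 1 ≤ b → b ≤ r a → b ≤ r (a + 1) →
    T a b < T (a + 1) b) ∧
  (∀ i : ℕ, 1 ≤ i → i ≤ n →
    ((Finset.Icc 1 R ×ˢ Finset.Icc 1 C).filter
      (fun q => q.2 ≤ r q.1 ∧ T q.1 q.2 = i)).card = c i)

/-- Row lengths of the shape `ϱ = (ℓ^{2k}, p, p)`: rows `1, ..., 2k` have length `ℓ`
and rows `2k+1`, `2k+2` have length `p`. -/
def rhoRow (l k p : ℕ) (a : ℕ) : ℕ := if a ≤ 2 * k then l else p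

/-- A semistandard Young tableau of shape `ϱ = (ℓ^{2k}, p, p)` with content
`(c 1, ..., c n)`. -/
def IsRhoSSYT (l k p n : ℕ) (c : ℕ → ℕ) (T : ℕ → ℕ → ℕ) : Prop :=
  IsSSYT (2 * k + 2) l (rhoRow l k p) n c T

/-- A tableau of shape `ϱ = (ℓ^{2k}, p, p)` is proper if `T (q+2) 1 ≥ T q ℓ`
for all `1 ≤ q ≤ 2k`. -/
def IsProper (l k : ℕ) (T : ℕ → ℕ → ℕ) : Prop :=
  ∀ q : ℕ, 1 ≤ q → q ≤ 2 * k → T q l ≤ T (q + 2) 1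

/-- Two fillings agree on every box of the shape with row lengths `r` and `R` rows. -/
def EqOnShape (R : ℕ) (r : ℕ → ℕ) (T T' : ℕ → ℕ → ℕ) : Prop :=
  ∀ a ∈ Finset.Icc 1 R, ∀ b ∈ Finset.Icc 1 (r a), T a b = T' a b

/-- The content `(c 1, ..., c n)` is `ℓ`-maximal if at least `n - 3` of the
amounts `c i` equal `ℓ`. -/
def IsMaximal (l n : ℕ) (c : ℕ → ℕ) : Prop :=
  n - 3 ≤ ((Finset.Icc 1 n).filter (fun i => c i = l)).card

/-- A filling is normalized if it vanishes outside the boxes of the shape. -/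
def Normalized (R : ℕ) (r : ℕ → ℕ) (T : ℕ → ℕ → ℕ) : Prop :=
  ∀ a b : ℕ, ¬ (1 ≤ a ∧ a ≤ R ∧ 1 ≤ b ∧ b ≤ r a) → T a b = 0
open Finset in
lemma le_first (g : ℕ → ℕ) (hg : ∀ a, 1 ≤ a → g (a+1) ≤ g a) :
    ∀ a, 1 ≤ a → g a ≤ g 1 := by
  intro a
  induction a with
  | zero => omega
  | succ b ih =>
    intro _
    by_cases hb : b = 0
    · subst hb; simp
    · exact le_trans (hg b (by omega)) (ih (by omega))

lemma tel (g : ℕ → ℕ) (hg : ∀ a, 1 ≤ a → g (a+1) ≤ g a) :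
    ∀ R, ∑ a ∈ Finset.Icc 1 R, (g a - g (a+1)) = g 1 - g (R+1) := by
  intro R
  induction R with
  | zero => simp
  | succ S ih =>
    rw [Finset.sum_Icc_succ_top (by omega)]
    have h1 := le_first g hg (S+1) (by omega)
    have h2 := hg (S+1) (by omega)
    omega

lemma key (R C : ℕ) (c : ℕ → ℕ) :
    ∀ n : ℕ, ∀ f : ℕ → ℕ,
    (∀ a, 1 ≤ a → f (a+1) ≤ f a) →
    (∀ a, f a ≤ C) →
    (∀ a, R < a → f a = 0) →
    (∀ i j : ℕ, 1 ≤ i → i ≤ j → j ≤ n → c j ≤ c i) →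
    (∀ j, 1 ≤ j → j ≤ n → ∑ i ∈ Finset.Icc 1 j, c i ≤ ∑ a ∈ Finset.Icc 1 j, f a) →
    (∑ a ∈ Finset.Icc 1 R, f a = ∑ i ∈ Finset.Icc 1 n, c i) →
    ∃ T, IsSSYT R C f n c T := by
  intro n
  induction n with
  | zero =>
    intro f hf hfC hz hmono hdom htot
    have h0 : ∑ a ∈ Finset.Icc 1 R, f a = 0 := by simpa using htot
    have hf0 : ∀ a, 1 ≤ a → a ≤ R → f a = 0 := by
      intro a h1 h2
      exact Finset.sum_eq_zero_iff.1 h0 a (by simp; omega)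
    refine ⟨fun _ _ => 0, ?_, ?_, ?_, ?_⟩
    · intro a ha b hb
      simp only [Finset.mem_Icc] at ha hb
      have := hf0 a ha.1 ha.2; omega
    · intro a ha b b' h1 h2 h3
      simp only [Finset.mem_Icc] at ha
      have := hf0 a ha.1 ha.2; omega
    · intro a h1 h2 b hb1 hb2 hb3
      have := hf0 a h1 (by omega); omega
    · intro i hi1 hi2; omega
  | succ n ih =>
    intro f hf hfC hz hmono hdom htot
    set m := c (n+1) with hm
    set g : ℕ → ℕ := fun a => min (f a) m with hg
    set f' : ℕ → ℕ := fun a => f a - (g a - g (a+1)) with hf'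
    have hm1 : m ≤ f 1 := by
      have h1 := hdom 1 (by omega) (by omega)
      have h2 := hmono 1 (n+1) (by omega) (by omega) (by omega)
      simp only [Finset.Icc_self, Finset.sum_singleton] at h1
      omega
    have hgmono : ∀ a, 1 ≤ a → g (a+1) ≤ g a := by
      intro a ha; have := hf a ha; simp only [hg]; omega
    have hsplit : ∀ a, f' a + (g a - g (a+1)) = f a := by
      intro a; simp only [hf', hg]; omega
    have hstrip : ∀ a, 1 ≤ a → f (a+1) ≤ f' a := by
      intro a ha; have := hf a ha; simp only [hf', hg]; omega
    have hf'le : ∀ a, f' a ≤ f a := by intro a; simp only [hf']; omega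
    have htel : ∀ j, ∑ a ∈ Finset.Icc 1 j, f a
        = ∑ a ∈ Finset.Icc 1 j, f' a + (g 1 - g (j+1)) := by
      intro j
      rw [← tel g hgmono j, ← Finset.sum_add_distrib]
      exact Finset.sum_congr rfl fun a _ => (hsplit a).symm
    have hg1 : g 1 = m := by simp only [hg]; omega
    have hgR : g (R+1) = 0 := by
      have := hz (R+1) (by omega); simp only [hg]; omega
    obtain ⟨T', hbound, hrow', hcol', hcnt'⟩ :=
      ih f' (fun a ha => le_trans (hf'le (a+1)) (hstrip a ha))
        (fun a => le_trans (hf'le a) (hfC a))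
        (fun a ha => by have h1 := hz a ha; have h2 := hf'le a; omega)
        (fun i j h1 h2 h3 => hmono i j h1 h2 (by omega))
        (by
          intro j hj1 hjn
          have h1 := hdom j hj1 (by omega)
          have h2 := hdom (j+1) (by omega) (by omega)
          have hc := hmono (j+1) (n+1) (by omega) (by omega) (by omega)
          have e1 : ∑ i ∈ Finset.Icc 1 (j+1), c i
              = ∑ i ∈ Finset.Icc 1 j, c i + c (j+1) :=
            Finset.sum_Icc_succ_top (by omega) c
          have e2 : ∑ a ∈ Finset.Icc 1 (j+1), f a
              = ∑ a ∈ Finset.Icc 1 j, f a + f (j+1) :=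
            Finset.sum_Icc_succ_top (by omega) f
          have e3 := htel j
          have e4 : g (j+1) = min (f (j+1)) m := rfl
          omega)
        (by
          have e1 := htel R
          have e2 : ∑ i ∈ Finset.Icc 1 (n+1), c i
              = ∑ i ∈ Finset.Icc 1 n, c i + c (n+1) :=
            Finset.sum_Icc_succ_top (by omega) c
          omega)
    have hT'le : ∀ a b, 1 ≤ a → a ≤ R → 1 ≤ b → b ≤ f' a → T' a b ≤ n := by
      intro a b h1 h2 h3 h4
      exact (hbound a (by simp; omega) b (by simp; omega)).2
    refine ⟨fun a b => if b ≤ f' a then T' a b else (n+1), ?_, ?_, ?_, ?_⟩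
    · intro a ha b hb
      dsimp only
      simp only [Finset.mem_Icc] at ha hb
      by_cases hbf : b ≤ f' a
      · rw [if_pos hbf]
        have h5 := hbound a (by simp; omega) b (by simp; omega)
        omega
      · rw [if_neg hbf]
        omega
    · intro a ha b b' h1 h2 h3
      dsimp only
      simp only [Finset.mem_Icc] at ha
      by_cases hb2 : b' ≤ f' a
      · have hbb : b ≤ f' a := by omega
        rw [if_pos hbb, if_pos hb2]
        exact hrow' a (by simp; omega) b b' h1 h2 hb2
      · rw [if_neg hb2]
        by_cases hbb : b ≤ f' a
        · rw [if_pos hbb]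
          have := hT'le a b ha.1 ha.2 h1 hbb
          omega
        · rw [if_neg hbb]
    · intro a h1 h2 b hb1 hb2 hb3
      dsimp only
      have hba : b ≤ f' a := le_trans hb3 (hstrip a h1)
      rw [if_pos hba]
      by_cases hb4 : b ≤ f' (a+1)
      · rw [if_pos hb4]
        exact hcol' a h1 h2 b hb1 hba hb4
      · rw [if_neg hb4]
        have := hT'le a b h1 (by omega) hb1 hba
        omega
    · intro i hi1 hi2
      dsimp only
      by_cases hin : i ≤ n
      · rw [← hcnt' i hi1 hin]
        apply congrArg
        apply Finset.filter_congr
        intro q hq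
        simp only [Finset.mem_product, Finset.mem_Icc] at hq
        constructor
        · rintro ⟨hq1, hq2⟩
          by_cases hq3 : q.2 ≤ f' q.1
          · rw [if_pos hq3] at hq2
            exact ⟨hq3, hq2⟩
          · rw [if_neg hq3] at hq2
            omega
        · rintro ⟨hq1, hq2⟩
          refine ⟨le_trans hq1 (hf'le q.1), ?_⟩
          rw [if_pos hq1]
          exact hq2
      · have hieq : i = n + 1 := by omega
        subst hieq
        have hset : ((Finset.Icc 1 R ×ˢ Finset.Icc 1 C).filter
            (fun q => q.2 ≤ f q.1 ∧ (if q.2 ≤ f' q.1 then T' q.1 q.2 else (n+1)) = n+1))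
            = ((Finset.Icc 1 R ×ˢ Finset.Icc 1 C).filter
            (fun q => f' q.1 < q.2 ∧ q.2 ≤ f q.1)) := by
          apply Finset.filter_congr
          intro q hq
          simp only [Finset.mem_product, Finset.mem_Icc] at hq
          constructor
          · rintro ⟨hq1, hq2⟩
            by_cases hq3 : q.2 ≤ f' q.1
            · rw [if_pos hq3] at hq2
              have := hT'le q.1 q.2 hq.1.1 hq.1.2 hq.2.1 hq3
              omega
            · exact ⟨by omega, hq1⟩
          · rintro ⟨hq1, hq2⟩
            refine ⟨hq2, ?_⟩
            rw [if_neg (by omega)]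
        refine Eq.trans (congrArg Finset.card hset) ?_
        rw [Finset.card_eq_sum_card_fiberwise
          (f := fun q : ℕ × ℕ => q.1) (t := Finset.Icc 1 R)
          (fun q hq => (Finset.mem_product.1 (Finset.mem_filter.1 hq).1).1)]
        have hfib : ∀ a ∈ Finset.Icc 1 R,
            (((Finset.Icc 1 R ×ˢ Finset.Icc 1 C).filter
              (fun q => f' q.1 < q.2 ∧ q.2 ≤ f q.1)).filter
              (fun q => q.1 = a)).card = f a - f' a := by
          intro a ha
          have hseteq : (((Finset.Icc 1 R ×ˢ Finset.Icc 1 C).filter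
              (fun q => f' q.1 < q.2 ∧ q.2 ≤ f q.1)).filter
              (fun q => q.1 = a)) = {a} ×ˢ Finset.Icc (f' a + 1) (f a) := by
            ext q
            simp only [Finset.mem_filter, Finset.mem_product, Finset.mem_Icc,
              Finset.mem_singleton]
            constructor
            · rintro ⟨⟨⟨hq1, hq2⟩, hq3, hq4⟩, hq5⟩
              subst hq5
              exact ⟨rfl, by omega, hq4⟩
            · rintro ⟨hq1, hq2, hq3⟩
              simp only [Finset.mem_Icc] at ha
              have h6 := hfC a
              rw [hq1]
              exact ⟨⟨⟨ha, by omega⟩, by omega, hq3⟩, rfl⟩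
          rw [hseteq, Finset.card_product, Finset.card_singleton, Nat.card_Icc]
          omega
        rw [Finset.sum_congr rfl hfib]
        have hfg : ∀ a ∈ Finset.Icc 1 R, f a - f' a = g a - g (a+1) := by
          intro a _; have := hsplit a; omega
        rw [Finset.sum_congr rfl hfg, tel g hgmono R]
        omega

lemma isSSYT_congr (R C n : ℕ) (r r' c : ℕ → ℕ) (T : ℕ → ℕ → ℕ)
    (h : ∀ a, 1 ≤ a → a ≤ R → r a = r' a) :
    IsSSYT R C r n c T → IsSSYT R C r' n c T := by
  rintro ⟨h1, h2, h3, h4⟩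
  refine ⟨?_, ?_, ?_, ?_⟩
  · intro a ha b hb
    simp only [Finset.mem_Icc] at ha hb
    refine h1 a (by simp only [Finset.mem_Icc]; omega) b ?_
    rw [h a ha.1 ha.2]
    simp; omega
  · intro a ha b b' hb1 hb2 hb3
    simp only [Finset.mem_Icc] at ha
    refine h2 a (by simp only [Finset.mem_Icc]; omega) b b' hb1 hb2 ?_
    rw [h a ha.1 ha.2]; exact hb3
  · intro a ha1 ha2 b hb1 hb2 hb3
    refine h3 a ha1 ha2 b hb1 ?_ ?_
    · rw [h a ha1 (by omega)]; exact hb2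
    · rw [h (a+1) (by omega) ha2]; exact hb3
  · intro i hi1 hi2
    rw [← h4 i hi1 hi2]
    apply congrArg
    apply Finset.filter_congr
    intro q hq
    simp only [Finset.mem_product, Finset.mem_Icc] at hq
    rw [h q.1 hq.1.1 hq.1.2]

/-- There exists a semistandard Young tableau of shape `ϱ = (ℓ^{2k}, p, p)` with
content `μ` if and only if `Λ ≥ p`. -/
theorem stmt14 (l k p n : ℕ) (c : ℕ → ℕ)
    (hl : 1 ≤ l) (hp : 1 ≤ p) (hpl : p ≤ l)
    (hbd : ∀ i : ℕ, 1 ≤ i → i ≤ n → c i ≤ l)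
    (hmono : ∀ i j : ℕ, 1 ≤ i → i ≤ j → j ≤ n → c j ≤ c i)
    (hsum : ∑ i ∈ Finset.Icc 1 n, c i = 2 * (k * l + p)) :
    (∃ T : ℕ → ℕ → ℕ, IsRhoSSYT l k p n c T) ↔
      p ≤ ∑ i ∈ Finset.Icc (2 * k + 2) n, c i := by
  have rp : ∀ a, p ≤ rhoRow l k p a := by
    intro a; unfold rhoRow; split_ifs <;> omega
  have rl : ∀ a, rhoRow l k p a ≤ l := by
    intro a; unfold rhoRow; split_ifs <;> omega
  have rlast : rhoRow l k p (2*k+2) = p := by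
    unfold rhoRow; rw [if_neg (by omega)]
  constructor
  · rintro ⟨T, hT⟩
    obtain ⟨hb, hrw, hcl, hcnt⟩ := hT
    have hTa : ∀ b, 1 ≤ b → b ≤ p → ∀ a, 1 ≤ a → a ≤ 2*k+2 → a ≤ T a b := by
      intro b hb1 hb2 a
      induction a with
      | zero => omega
      | succ a ih =>
        intro _ h2
        by_cases ha : a = 0
        · subst ha
          exact (hb 1 (by simp only [Finset.mem_Icc]; omega) b (by simp only [Finset.mem_Icc]; exact ⟨hb1, le_trans hb2 (rp 1)⟩)).1
        · have h3 := ih (by omega) (by omega)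
          have h4 := hcl a (by omega) h2 b hb1 (le_trans hb2 (rp a)) (le_trans hb2 (rp (a+1)))
          omega
    set s := (Finset.Icc 1 (2*k+2) ×ˢ Finset.Icc 1 l).filter
      (fun q => q.2 ≤ rhoRow l k p q.1 ∧ T q.1 q.2 ∈ Finset.Icc (2*k+2) n) with hs
    have hps : p ≤ s.card := by
      have := Finset.card_le_card_of_injOn (fun b => ((2*k+2 : ℕ), b))
        (s := Finset.Icc 1 p) (t := s)
        (by
          intro b hbmem
          simp only [Finset.mem_coe, Finset.mem_Icc] at hbmem
          have hub := (hb (2*k+2) (by simp) b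
            (by simp only [Finset.mem_Icc]; exact ⟨hbmem.1, le_trans hbmem.2 (rp _)⟩))
          simp only [hs, Finset.mem_coe, Finset.mem_filter, Finset.mem_product, Finset.mem_Icc]
          refine ⟨⟨by omega, ⟨hbmem.1, le_trans hbmem.2 hpl⟩⟩, le_trans hbmem.2 (rp _), ?_, hub.2⟩
          exact hTa b hbmem.1 hbmem.2 (2*k+2) (by omega) (le_refl _))
        (by
          intro x hx y hy hxy
          exact congrArg Prod.snd hxy)
      simpa using this
    have heq : s.card = ∑ i ∈ Finset.Icc (2*k+2) n, c i := by
      rw [Finset.card_eq_sum_card_fiberwise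
        (f := fun q : ℕ × ℕ => T q.1 q.2) (t := Finset.Icc (2*k+2) n)
        (fun q hq => (Finset.mem_filter.1 hq).2.2)]
      apply Finset.sum_congr rfl
      intro i hi
      simp only [Finset.mem_Icc] at hi
      rw [← hcnt i (by omega) hi.2]
      apply congrArg
      ext q
      simp only [hs, Finset.mem_filter, Finset.mem_product, Finset.mem_Icc]
      constructor
      · rintro ⟨⟨hq1, hq2⟩, hq3⟩
        exact ⟨hq1, hq2.1, hq3⟩
      · rintro ⟨hq1, hq2, hq3⟩
        exact ⟨⟨hq1, hq2, by omega⟩, hq3⟩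
    omega
  · intro hL
    have hn : 2*k+2 ≤ n := by
      by_contra h
      rw [Finset.Icc_eq_empty (by omega), Finset.sum_empty] at hL
      omega
    set X := k * l with hX
    set ft : ℕ → ℕ := fun a => if a ≤ 2*k then l else if a ≤ 2*k+2 then p else 0 with hft
    have hA : ∀ j, j ≤ 2*k → ∑ a ∈ Finset.Icc 1 j, ft a = j * l := by
      intro j hj
      calc ∑ a ∈ Finset.Icc 1 j, ft a = ∑ a ∈ Finset.Icc 1 j, l := by
            apply Finset.sum_congr rfl
            intro a ha
            simp only [Finset.mem_Icc] at ha
            simp only [hft]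
            rw [if_pos (by omega)]
        _ = j * l := by rw [Finset.sum_const, Nat.card_Icc, smul_eq_mul, Nat.add_sub_cancel]
    have hfv : ∀ a, 2*k < a → a ≤ 2*k+2 → ft a = p := by
      intro a h1 h2
      simp only [hft]
      rw [if_neg (by omega), if_pos (by omega)]
    have hB : ∑ a ∈ Finset.Icc 1 (2*k+1), ft a = 2*X + p := by
      rw [Finset.sum_Icc_succ_top (by omega), hA (2*k) (le_refl _), hfv (2*k+1) (by omega) (by omega)]
      rw [hX]; ring
    have hC : ∑ a ∈ Finset.Icc 1 (2*k+2), ft a = 2*X + p + p := by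
      rw [Finset.sum_Icc_succ_top (by omega), hB, hfv (2*k+2) (by omega) (by omega)]
    have hD : ∀ j, 2*k+2 ≤ j → ∑ a ∈ Finset.Icc 1 j, ft a = 2*X + p + p := by
      intro j hj
      induction j, hj using Nat.le_induction with
      | base => exact hC
      | succ j hj ih =>
        rw [Finset.sum_Icc_succ_top (by omega), ih]
        have hz : ft (j+1) = 0 := by
          simp only [hft]
          rw [if_neg (by omega), if_neg (by omega)]
        rw [hz]
        omega
    have hsplitc : ∑ i ∈ Finset.Icc 1 (2*k+1), c i + ∑ i ∈ Finset.Icc (2*k+2) n, c i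
        = ∑ i ∈ Finset.Icc 1 n, c i := by
      rw [show (1 : ℕ) = 0 + 1 from rfl, Finset.Icc_add_one_left_eq_Ioc,
        show (2*k+2 : ℕ) = (2*k+1) + 1 from rfl, Finset.Icc_add_one_left_eq_Ioc, Finset.Icc_add_one_left_eq_Ioc]
      exact Finset.sum_Ioc_consecutive c (by omega) (by omega)
    have h2X : 2 * (X + p) = 2*X + p + p := by ring
    obtain ⟨T, hT⟩ := key (2*k+2) l c n ft
      (by intro a ha; simp only [hft]; split_ifs <;> omega)
      (by intro a; simp only [hft]; split_ifs <;> omega)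
      (by intro a ha; simp only [hft]; rw [if_neg (by omega), if_neg (by omega)])
      hmono
      (by
        intro j hj1 hjn
        rcases le_or_gt j (2*k) with hj | hj
        · rw [hA j hj]
          calc ∑ i ∈ Finset.Icc 1 j, c i ≤ ∑ i ∈ Finset.Icc 1 j, l :=
                Finset.sum_le_sum (fun i hi => by
                  simp only [Finset.mem_Icc] at hi
                  exact hbd i hi.1 (by omega))
            _ = j * l := by rw [Finset.sum_const, Nat.card_Icc, smul_eq_mul, Nat.add_sub_cancel]
        · rcases le_or_gt j (2*k+1) with hj2 | hj2
          · have hje : j = 2*k+1 := by omega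
            subst hje
            rw [hB]
            omega
          · rw [hD j (by omega)]
            have hsub : ∑ i ∈ Finset.Icc 1 j, c i ≤ ∑ i ∈ Finset.Icc 1 n, c i :=
              Finset.sum_le_sum_of_subset (Finset.Icc_subset_Icc_right hjn)
            omega)
      (by rw [hC]; omega)
    refine ⟨T, ?_⟩
    exact isSSYT_congr (2*k+2) l n ft (rhoRow l k p) c T
      (by
        intro a h1 h2
        simp only [hft]
        unfold rhoRow
        split_ifs <;> omega)
      hT
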